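/- Let Ξ be a relatively dense subset of ℝ^d containing 0, and suppose the subgroup L of ℝ^d generated by Ξ is a lattice (a discrete cocompact subgroup). Then there exists a positive integer M such that L equals the M-fold sumset Ξ + Ξ + ⋯ + Ξ (M times). -/

import Mathlib

/-- Auxiliary: lattice points in a ball form a finite set. -/
lemma stmt0_aux_finite {d : ℕ} (b : Module.Basis (Fin d) ℝ (EuclideanSpace ℝ (Fin d)))
    (A : Set (EuclideanSpace ℝ (Fin d)))
    (hA : A = Set.range (fun c : Fin d → ℤ => ∑ i, c i • b i)) (r : ℝ) :
    {z : EuclideanSpace ℝ (Fin d) | z ∈ A ∧ ‖z‖ ≤ r}.Finite := by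
  classical
  set φ : EuclideanSpace ℝ (Fin d) →L[ℝ] (Fin d → ℝ) :=
    LinearMap.toContinuousLinearMap (b.equivFun : _ ≃ₗ[ℝ] (Fin d → ℝ)).toLinearMap with hφ
  set N : ℤ := ⌈‖φ‖ * r⌉ with hN
  have key : {z : EuclideanSpace ℝ (Fin d) | z ∈ A ∧ ‖z‖ ≤ r} ⊆
      (fun c : Fin d → ℤ => ∑ i, c i • b i) ''
        (Set.pi Set.univ fun _ : Fin d => Set.Icc (-N) N) := by
    rintro z ⟨hzA, hzr⟩
    rw [hA] at hzA
    obtain ⟨c, hc⟩ := hzA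
    refine ⟨c, ?_, hc⟩
    intro i _
    have hz' : z = b.equivFun.symm (fun i => (c i : ℝ)) := by
      rw [Module.Basis.equivFun_symm_apply, ← hc]
      exact (Finset.sum_congr rfl fun i _ => (Int.cast_smul_eq_zsmul ℝ (c i) (b i))).symm
    have hφz : φ z = fun i => (c i : ℝ) := by
      rw [hφ]
      simp only [LinearMap.coe_toContinuousLinearMap', LinearEquiv.coe_coe]
      rw [hz', LinearEquiv.apply_symm_apply]
    have h1 : |(c i : ℝ)| ≤ ‖φ‖ * r := by
      have h2 : ‖(φ z) i‖ ≤ ‖φ z‖ := norm_le_pi_norm (φ z) i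
      have h3 : ‖φ z‖ ≤ ‖φ‖ * ‖z‖ := φ.le_opNorm z
      have h4 : ‖φ‖ * ‖z‖ ≤ ‖φ‖ * r := mul_le_mul_of_nonneg_left hzr (norm_nonneg φ)
      have : ‖(φ z) i‖ = |(c i : ℝ)| := by rw [hφz]; simp [Real.norm_eq_abs]
      linarith
    have h5 : |(c i : ℝ)| ≤ (N : ℝ) := h1.trans (Int.le_ceil _)
    have h6 : |c i| ≤ N := by
      have h7 : ((|c i| : ℤ) : ℝ) ≤ (N : ℝ) := by rw [Int.cast_abs]; exact h5
      exact_mod_cast h7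
    simp only [Set.mem_Icc]
    exact abs_le.mp h6
  exact Set.Finite.subset (Set.Finite.image _ (Set.Finite.pi fun _ => Set.finite_Icc _ _)) key


/-- Auxiliary: a list with entries in `Ξ` (which contains `0`) of length at most `n`
gives a representation of its sum as a sum of exactly `n` elements of `Ξ`. -/
lemma stmt0_aux_list {α : Type*} [AddCommMonoid α] (Ξ : Set α) (h0 : (0:α) ∈ Ξ)
    (l : List α) (hl : ∀ x ∈ l, x ∈ Ξ) (n : ℕ) (hn : l.length ≤ n) :
    ∃ f : Fin n → α, (∀ i, f i ∈ Ξ) ∧ ∑ i, f i = l.sum := by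
  have hlen : (l ++ List.replicate (n - l.length) (0:α)).length = n := by
    simp only [List.length_append, List.length_replicate]; omega
  refine ⟨fun i => (l ++ List.replicate (n - l.length) (0:α)).get (Fin.cast hlen.symm i), ?_, ?_⟩
  · intro i
    show (l ++ List.replicate (n - l.length) (0:α)).get (Fin.cast hlen.symm i) ∈ Ξ
    have hmem : (l ++ List.replicate (n - l.length) (0:α)).get (Fin.cast hlen.symm i)
        ∈ l ++ List.replicate (n - l.length) (0:α) := List.get_mem _ _
    rcases List.mem_append.mp hmem with h | h
    · exact hl _ h
    · rw [List.eq_of_mem_replicate h]; exact h0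
  · show (∑ i : Fin n, (l ++ List.replicate (n - l.length) (0:α)).get (Fin.cast hlen.symm i))
      = l.sum
    have hsum1 : (∑ i : Fin n, (l ++ List.replicate (n - l.length) (0:α)).get
          (Fin.cast hlen.symm i))
        = ∑ j : Fin (l ++ List.replicate (n - l.length) (0:α)).length,
            (l ++ List.replicate (n - l.length) (0:α)).get j :=
      Fintype.sum_equiv (finCongr hlen.symm) _ _ fun i => rfl
    have hsum2 : (∑ j : Fin (l ++ List.replicate (n - l.length) (0:α)).length,
          (l ++ List.replicate (n - l.length) (0:α)).get j)
        = (l ++ List.replicate (n - l.length) (0:α)).sum := by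
      simpa using Fin.sum_univ_get (l ++ List.replicate (n - l.length) (0:α))
    rw [hsum1, hsum2, List.sum_append, List.sum_replicate, smul_zero, add_zero]

/-- If Ξ is relatively dense in ℝ^d, contains 0, and the subgroup L it
generates is a lattice (ℤ-span of a basis of ℝ^d), then L is an M-fold sumset of Ξ
for some positive integer M. -/
theorem stmt0 (d : ℕ) (hd : 0 < d) (Ξ : Set (EuclideanSpace ℝ (Fin d)))
    (h0 : (0 : EuclideanSpace ℝ (Fin d)) ∈ Ξ)
    (hrd : ∃ R > (0:ℝ), ∀ x : EuclideanSpace ℝ (Fin d), ∃ ξ ∈ Ξ, ‖x - ξ‖ ≤ R)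
    (L : AddSubgroup (EuclideanSpace ℝ (Fin d)))
    (hL : L = AddSubgroup.closure Ξ)
    (b : Module.Basis (Fin d) ℝ (EuclideanSpace ℝ (Fin d)))
    (hlat : (L : Set (EuclideanSpace ℝ (Fin d))) =
      Set.range (fun c : Fin d → ℤ => ∑ i, c i • b i)) :
    ∃ M : ℕ, 0 < M ∧ (L : Set (EuclideanSpace ℝ (Fin d))) =
      {x | ∃ f : Fin M → EuclideanSpace ℝ (Fin d), (∀ i, f i ∈ Ξ) ∧ ∑ i, f i = x} := by
  classical
  obtain ⟨R, hR, hcov⟩ := hrd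
  have hpick : ∀ x : EuclideanSpace ℝ (Fin d), ∃ ξ, ξ ∈ Ξ ∧ ‖x - ξ‖ ≤ R := by
    intro x; obtain ⟨ξ, h1, h2⟩ := hcov x; exact ⟨ξ, h1, h2⟩
  choose pick pickΞ pickR using hpick
  set S : AddSubmonoid (EuclideanSpace ℝ (Fin d)) := AddSubmonoid.closure Ξ with hS
  have hΞL : Ξ ⊆ (L : Set (EuclideanSpace ℝ (Fin d))) := by
    rw [hL]; exact AddSubgroup.subset_closure
  have hΞS : Ξ ⊆ (S : Set (EuclideanSpace ℝ (Fin d))) := AddSubmonoid.subset_closure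
  have hSL : ∀ x, x ∈ S → x ∈ L := by
    intro x hx
    exact AddSubmonoid.closure_le.mpr
      (hΞL : Ξ ⊆ (L.toAddSubmonoid : Set (EuclideanSpace ℝ (Fin d)))) hx
  have hF : ∀ r : ℝ, {z : EuclideanSpace ℝ (Fin d) | z ∈ L ∧ ‖z‖ ≤ r}.Finite :=
    fun r => stmt0_aux_finite b (L : Set (EuclideanSpace ℝ (Fin d))) hlat r
  -- every element of L has a positive multiple in S
  have hmul : ∀ y : EuclideanSpace ℝ (Fin d), y ∈ L → ∃ k : ℕ, 0 < k ∧ k • y ∈ S := by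
    intro y hy
    set s : ℕ → EuclideanSpace ℝ (Fin d) :=
      fun n => Nat.rec 0 (fun n sn => sn + pick ((n + 1) • y - sn)) n with hsdef
    have hsucc : ∀ n, s (n + 1) = s n + pick ((n + 1) • y - s n) := fun n => rfl
    have hsS : ∀ n, s n ∈ S := by
      intro n
      induction n with
      | zero => exact zero_mem S
      | succ n ih => rw [hsucc]; exact add_mem ih (hΞS (pickΞ _))
    have hdiff : ∀ m n, m ≤ n → s n - s m ∈ S := by
      intro m n h
      induction n, h using Nat.le_induction with
      | base => simpa using zero_mem S
      | succ n hmn ih =>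
          have h1 : s (n + 1) - s m = (s n - s m) + pick ((n + 1) • y - s n) := by
            rw [hsucc]; abel
          rw [h1]
          exact add_mem ih (hΞS (pickΞ _))
    have hmemF : ∀ n : ℕ, s (n + 1) - (n + 1) • y ∈
        {z : EuclideanSpace ℝ (Fin d) | z ∈ L ∧ ‖z‖ ≤ R} := by
      intro n
      constructor
      · exact sub_mem (hSL _ (hsS (n + 1))) (AddSubgroup.nsmul_mem L hy (n + 1))
      · have h1 : ‖s (n + 1) - (n + 1) • y‖
            = ‖((n + 1) • y - s n) - pick ((n + 1) • y - s n)‖ := by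
          rw [norm_sub_rev]
          congr 1
          rw [hsucc]; abel
        rw [h1]; exact pickR _
    have hfin : Finite ↥{z : EuclideanSpace ℝ (Fin d) | z ∈ L ∧ ‖z‖ ≤ R} := (hF R).to_subtype
    obtain ⟨m, n, hne, heq⟩ := Finite.exists_ne_map_eq_of_infinite
      (fun n : ℕ => (⟨s (n + 1) - (n + 1) • y, hmemF n⟩ :
        ↥{z : EuclideanSpace ℝ (Fin d) | z ∈ L ∧ ‖z‖ ≤ R}))
    have heq' : s (m + 1) - (m + 1) • y = s (n + 1) - (n + 1) • y := by
      simpa using congrArg Subtype.val heq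
    have key : ∀ m n : ℕ, m < n →
        s (m + 1) - (m + 1) • y = s (n + 1) - (n + 1) • y → ∃ k : ℕ, 0 < k ∧ k • y ∈ S := by
      intro m n hmn h
      refine ⟨n - m, Nat.sub_pos_of_lt hmn, ?_⟩
      have h7 : s (n + 1) - s (m + 1) = (n + 1) • y - (m + 1) • y := by
        rw [sub_eq_sub_iff_add_eq_add] at h ⊢
        rw [← h]
        exact add_comm _ _
      have h6 : (m + 1) • y + (n - m) • y = (n + 1) • y := by
        rw [← add_nsmul]
        congr 1
        omega
      have h8 : (n - m) • y = s (n + 1) - s (m + 1) :=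
        (eq_sub_of_add_eq' h6).trans h7.symm
      rw [h8]
      exact hdiff (m + 1) (n + 1) (by omega)
    rcases hne.lt_or_gt with hmn | hmn
    · exact key m n hmn heq'
    · exact key n m hmn heq'.symm
  -- S is closed under negation
  have hneg : ∀ x ∈ S, -x ∈ S := by
    intro x hx
    obtain ⟨k, hk, hks⟩ := hmul (-x) (neg_mem (hSL x hx))
    have h1 : -x = k • (-x) + (k - 1) • x := by
      have h2 : (k - 1) • x = k • x - x := by
        have h3 := sub_nsmul x (Nat.one_le_iff_ne_zero.mpr hk.ne')
        simpa [sub_eq_add_neg] using h3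
      rw [h2, smul_neg]; abel
    rw [h1]
    exact add_mem hks (AddSubmonoid.nsmul_mem S hx _)
  -- L ⊆ S
  have hLS : ∀ x, x ∈ L → x ∈ S := by
    intro x hx
    rw [hL] at hx
    let G : AddSubgroup (EuclideanSpace ℝ (Fin d)) :=
      { S with neg_mem' := fun {x} hx => hneg x hx }
    exact (AddSubgroup.closure_le G).mpr (fun y hy => hΞS hy) hx
  -- finite set of remainders and uniform bound
  set F : Set (EuclideanSpace ℝ (Fin d)) :=
    {z : EuclideanSpace ℝ (Fin d) | z ∈ L ∧ ‖z‖ ≤ R} with hFdef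
  have hFfin : F.Finite := hF R
  have hrepex : ∀ z : EuclideanSpace ℝ (Fin d),
      ∃ l : List (EuclideanSpace ℝ (Fin d)), (∀ x ∈ l, x ∈ Ξ) ∧ (z ∈ F → l.sum = z) := by
    intro z
    by_cases hz : z ∈ F
    · obtain ⟨l, h1, h2⟩ := AddSubmonoid.exists_list_of_mem_closure (hLS z hz.1)
      exact ⟨l, h1, fun _ => h2⟩
    · exact ⟨[], by simp, fun h => absurd h hz⟩
  choose rep repΞ repsum using hrepex
  set M₀ : ℕ := hFfin.toFinset.sup (fun z => (rep z).length) with hM₀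
  refine ⟨M₀ + 1, Nat.succ_pos _, ?_⟩
  ext x
  constructor
  · intro hx
    have hξ : pick x ∈ Ξ := pickΞ x
    have hfF : x - pick x ∈ F := ⟨sub_mem hx (hΞL hξ), pickR x⟩
    have hlenle : (rep (x - pick x)).length ≤ M₀ :=
      Finset.le_sup (f := fun z => (rep z).length) (hFfin.mem_toFinset.mpr hfF)
    obtain ⟨f, hf1, hf2⟩ := stmt0_aux_list Ξ h0 (pick x :: rep (x - pick x))
      (by
        intro u hu
        rcases List.mem_cons.mp hu with h | h
        · rw [h]; exact hξ
        · exact repΞ _ _ h)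
      (M₀ + 1)
      (by simp only [List.length_cons]; omega)
    refine ⟨f, hf1, ?_⟩
    rw [hf2, List.sum_cons, repsum _ hfF]
    abel
  · rintro ⟨g, hg1, hg2⟩
    rw [← hg2]
    exact AddSubgroup.sum_mem L fun i _ => hΞL (hg1 i)
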